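/- arXiv:2104.14499 — 10 statements merged into one kernel-verified Lean document; each statement's English description precedes it below -/
import Mathlib

section
/- Let α ∈ (0,1], let f, g be α-conformable-differentiable at t > 0 with g(t) ≠ 0. Then f/g is α-conformable-differentiable at t and D^α(f/g)(t) = (g(t) D^α f(t) − f(t) D^α g(t)) / g(t)². -/
open Filter Topology Real

/-- Quotient rule for the conformable fractional derivative. -/
theorem stmt_3 (f g : ℝ → ℝ) (t α Df Dg : ℝ) (ht : 0 < t) (hα : α ∈ Set.Ioc (0:ℝ) 1)
    (hfc : ContinuousAt f t) (hgc : ContinuousAt g t) (hgt : g t ≠ 0)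
    (hf : Tendsto (fun ε : ℝ => (f (t + ε * t ^ (1 - α)) - f t) / ε) (𝓝[≠] 0) (𝓝 Df))
    (hg : Tendsto (fun ε : ℝ => (g (t + ε * t ^ (1 - α)) - g t) / ε) (𝓝[≠] 0) (𝓝 Dg)) :
    Tendsto (fun ε : ℝ =>
        (f (t + ε * t ^ (1 - α)) / g (t + ε * t ^ (1 - α)) - f t / g t) / ε)
      (𝓝[≠] 0) (𝓝 ((g t * Df - f t * Dg) / (g t) ^ 2)) := by
  have hx : Tendsto (fun ε : ℝ => t + ε * t ^ (1 - α)) (𝓝[≠] 0) (𝓝 t) := by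
    have h1 : Tendsto (fun ε : ℝ => t + ε * t ^ (1 - α)) (𝓝 0) (𝓝 (t + 0 * t ^ (1 - α))) := by
      exact (continuous_const.add (continuous_id.mul continuous_const)).tendsto 0
    simpa using h1.mono_left nhdsWithin_le_nhds
  have hgx : Tendsto (fun ε : ℝ => g (t + ε * t ^ (1 - α))) (𝓝[≠] 0) (𝓝 (g t)) :=
    hgc.tendsto.comp hx
  have hfx : Tendsto (fun ε : ℝ => f (t + ε * t ^ (1 - α))) (𝓝[≠] 0) (𝓝 (f t)) :=
    hfc.tendsto.comp hx
  have hne : ∀ᶠ ε in 𝓝[≠] (0:ℝ), g (t + ε * t ^ (1 - α)) ≠ 0 := hgx.eventually_ne hgt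
  have hεne : ∀ᶠ ε in 𝓝[≠] (0:ℝ), ε ≠ 0 := eventually_mem_nhdsWithin
  have hmain : Tendsto (fun ε : ℝ =>
      ((f (t + ε * t ^ (1 - α)) - f t) / ε * g t
        - f t * ((g (t + ε * t ^ (1 - α)) - g t) / ε))
        / (g (t + ε * t ^ (1 - α)) * g t))
      (𝓝[≠] 0) (𝓝 ((Df * g t - f t * Dg) / (g t * g t))) :=
    ((hf.mul_const _).sub (hg.const_mul _)).div (hgx.mul_const _) (mul_ne_zero hgt hgt)
  have hval : (Df * g t - f t * Dg) / (g t * g t) = (g t * Df - f t * Dg) / (g t) ^ 2 := by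
    ring
  rw [← hval]
  refine hmain.congr' ?_
  filter_upwards [hne, hεne] with ε hg0 hε0
  field_simp
  ring
end

section
/- Let φ : ℝ → ℝ be differentiable and satisfy φ' = μ + λφ² on an open set S, with λ ≠ 0 and λμ > 0. Let k² = 4λμ + 1 and define U(ε) = 6λμ + 6λ² φ(ε)². Then U satisfies U'' + (k² − 1)U − U² = 0 on S. -/
open Filter Topology Real

/-- Set 2 solution of the reduced Boussinesq ODE U'' + (k²−1)U − U² = 0. -/
theorem stmt_10 (lam mu k : ℝ) (φ U : ℝ → ℝ) (S : Set ℝ) (hS : IsOpen S)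
    (hlam : lam ≠ 0) (h : lam * mu > 0)
    (hφ : ∀ ε ∈ S, HasDerivAt φ (mu + lam * φ ε ^ 2) ε)
    (hk : k ^ 2 = 4 * lam * mu + 1)
    (hU : U = fun ε => 6 * lam * mu + 6 * lam ^ 2 * φ ε ^ 2) :
    ∀ ε ∈ S, deriv (deriv U) ε + (k ^ 2 - 1) * U ε - U ε ^ 2 = 0 := by
  intro ε hε
  have hg : ∀ x ∈ S, HasDerivAt U (12 * lam ^ 2 * φ x * (mu + lam * φ x ^ 2)) x := by
    intro x hx
    have h1 := (((hφ x hx).pow 2).const_mul (6 * lam ^ 2)).const_add (6 * lam * mu)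
    rw [hU]
    refine h1.congr_deriv ?_
    push_cast
    ring
  have heq : deriv U =ᶠ[𝓝 ε] fun x => 12 * lam ^ 2 * φ x * (mu + lam * φ x ^ 2) :=
    eventually_of_mem (hS.mem_nhds hε) fun x hx => (hg x hx).deriv
  have h2 : HasDerivAt (fun x => 12 * lam ^ 2 * φ x * (mu + lam * φ x ^ 2))
      (12 * lam ^ 2 * (mu + 3 * lam * φ ε ^ 2) * (mu + lam * φ ε ^ 2)) ε := by
    have h1 := hφ ε hε
    have h3 := (h1.const_mul (12 * lam ^ 2)).mul
      (((h1.pow 2).const_mul lam).const_add mu)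
    refine h3.congr_deriv ?_
    simp only [Pi.pow_apply]
    push_cast
    ring
  have hdd : deriv (deriv U) ε = 12 * lam ^ 2 * (mu + 3 * lam * φ ε ^ 2) * (mu + lam * φ ε ^ 2) := by
    rw [heq.deriv_eq, h2.deriv]
  rw [hdd, hU, hk]
  ring
end

section
/- Let φ : ℝ → ℝ be differentiable and satisfy φ' = μ + λφ² on an open set S where φ ≠ 0, with λ ≠ 0, μ ≠ 0. Let k² = 4λμ + 1 and define U(ε) = 6λμ + 6μ² φ(ε)^{−2}. Then U satisfies U'' + (k² − 1)U − U² = 0 on S. -/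
open Filter Topology Real

/-- Set 3 solution of the reduced Boussinesq ODE U'' + (k²−1)U − U² = 0. -/
theorem stmt_11 (lam mu k : ℝ) (φ U : ℝ → ℝ) (S : Set ℝ) (hS : IsOpen S)
    (hlam : lam ≠ 0) (hmu : mu ≠ 0) (hφ0 : ∀ ε ∈ S, φ ε ≠ 0)
    (hφ : ∀ ε ∈ S, HasDerivAt φ (mu + lam * φ ε ^ 2) ε)
    (hk : k ^ 2 = 4 * lam * mu + 1)
    (hU : U = fun ε => 6 * lam * mu + 6 * mu ^ 2 / φ ε ^ 2) :
    ∀ ε ∈ S, deriv (deriv U) ε + (k ^ 2 - 1) * U ε - U ε ^ 2 = 0 := by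
  set V : ℝ → ℝ := fun ε => -12 * mu ^ 2 * (mu + lam * φ ε ^ 2) / φ ε ^ 3 with hV
  have hU' : ∀ ε ∈ S, HasDerivAt U (V ε) ε := by
    intro ε hε
    have hne : φ ε ≠ 0 := hφ0 ε hε
    have hU2 : U = fun x => 6 * lam * mu + 6 * mu ^ 2 * (φ x ^ 2)⁻¹ := by
      rw [hU]; funext x; rw [div_eq_mul_inv]
    have h := ((((hφ ε hε).pow 2).inv (pow_ne_zero 2 hne)).const_mul
      (6 * mu ^ 2)).const_add (6 * lam * mu)
    rw [hU2]
    refine h.congr_deriv ?_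
    simp only [hV, Pi.pow_apply]
    field_simp
    ring
  intro ε hε
  have hne : φ ε ≠ 0 := hφ0 ε hε
  have hEq : deriv U =ᶠ[𝓝 ε] V := by
    filter_upwards [hS.mem_nhds hε] with x hx
    exact (hU' x hx).deriv
  have hV' : HasDerivAt V
      ((-12 * mu ^ 2 * (lam * (2 * φ ε ^ (2-1) * (mu + lam * φ ε ^ 2))) * φ ε ^ 3 -
        -12 * mu ^ 2 * (mu + lam * φ ε ^ 2) * (3 * φ ε ^ (3-1) * (mu + lam * φ ε ^ 2))) /
        (φ ε ^ 3) ^ 2) ε := by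
    have hnum : HasDerivAt (fun x => -12 * mu ^ 2 * (mu + lam * φ x ^ 2))
        (-12 * mu ^ 2 * (lam * (2 * φ ε ^ (2-1) * (mu + lam * φ ε ^ 2)))) ε := by
      have h := ((((hφ ε hε).pow 2).const_mul lam).const_add mu).const_mul (-12 * mu ^ 2)
      refine h.congr_deriv ?_
      ring
    have hden : HasDerivAt (fun x => φ x ^ 3)
        (3 * φ ε ^ (3-1) * (mu + lam * φ ε ^ 2)) ε := (hφ ε hε).pow 3
    exact hnum.div hden (pow_ne_zero 3 hne)
  have hderiv2 : deriv (deriv U) ε = deriv V ε := hEq.deriv_eq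
  rw [hderiv2, hV'.deriv, hU, hk]
  field_simp
  ring
end

section
/- Let φ satisfy φ' = μ + λφ² on an open set S where φ ≠ 0, with λ, μ ∈ ℝ. Let k² = 16λμ + 1 and define U(ε) = 12λμ + 6λ² φ(ε)² + 6μ² φ(ε)^{−2}. Then U satisfies U'' + (k² − 1)U − U² = 0 on S. -/
open Filter Topology Real

/-- Set 1 solution of the reduced Boussinesq ODE U'' + (k²−1)U − U² = 0. -/
theorem stmt_12 (lam mu k : ℝ) (φ U : ℝ → ℝ) (S : Set ℝ) (hS : IsOpen S)
    (hφ0 : ∀ ε ∈ S, φ ε ≠ 0)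
    (hφ : ∀ ε ∈ S, HasDerivAt φ (mu + lam * φ ε ^ 2) ε)
    (hk : k ^ 2 = 16 * lam * mu + 1)
    (hU : U = fun ε => 12 * lam * mu + 6 * lam ^ 2 * φ ε ^ 2 + 6 * mu ^ 2 / φ ε ^ 2) :
    ∀ ε ∈ S, deriv (deriv U) ε + (k ^ 2 - 1) * U ε - U ε ^ 2 = 0 := by
  set V : ℝ → ℝ := fun x =>
    (mu + lam * φ x ^ 2) * (12 * lam ^ 2 * φ x - 12 * mu ^ 2 / φ x ^ 3) with hV
  have hU' : ∀ x ∈ S, HasDerivAt U (V x) x := by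
    intro x hx
    have h := hφ x hx
    have hne := hφ0 x hx
    have h2 : HasDerivAt (fun ε => φ ε ^ 2) (2 * φ x * (mu + lam * φ x ^ 2)) x := by
      have := h.fun_pow 2
      simpa [mul_comm, mul_assoc, mul_left_comm] using this
    have h3 : HasDerivAt (fun ε => 6 * mu ^ 2 / φ ε ^ 2)
        ((0 * φ x ^ 2 - 6 * mu ^ 2 * (2 * φ x * (mu + lam * φ x ^ 2))) / (φ x ^ 2) ^ 2) x :=
      (hasDerivAt_const x (6 * mu ^ 2)).div h2 (pow_ne_zero 2 hne)
    have hsum := ((hasDerivAt_const x (12 * lam * mu)).fun_add (h2.const_mul (6 * lam ^ 2))).fun_add h3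
    rw [hU]
    convert hsum using 1
    · rfl
    · rfl
    have h3 : (φ x) ^ 3 ≠ 0 := pow_ne_zero 3 hne
    field_simp
    ring_nf
    simp only [hV]
    field_simp
    ring
  have hderivU : Set.EqOn (deriv U) V S := fun x hx => (hU' x hx).deriv
  intro ε hε
  have hne := hφ0 ε hε
  have h := hφ ε hε
  -- derivative of V at ε
  have hA : HasDerivAt (fun ε => 12 * lam ^ 2 * φ ε) (12 * lam ^ 2 * (mu + lam * φ ε ^ 2)) ε :=
    h.const_mul _
  have hB : HasDerivAt (fun ε => φ ε ^ 3) (3 * φ ε ^ 2 * (mu + lam * φ ε ^ 2)) ε := by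
    have := h.fun_pow 3
    simpa [mul_comm, mul_assoc, mul_left_comm] using this
  have hC : HasDerivAt (fun ε => 12 * mu ^ 2 / φ ε ^ 3)
      ((0 * φ ε ^ 3 - 12 * mu ^ 2 * (3 * φ ε ^ 2 * (mu + lam * φ ε ^ 2))) / (φ ε ^ 3) ^ 2) ε :=
    (hasDerivAt_const ε (12 * mu ^ 2)).div hB (pow_ne_zero 3 hne)
  have hD := hA.sub hC
  have h2 : HasDerivAt (fun ε => mu + lam * φ ε ^ 2)
      (2 * lam * φ ε * (mu + lam * φ ε ^ 2)) ε := by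
    have := (h.fun_pow 2).const_mul lam
    have := (hasDerivAt_const ε mu).fun_add this
    convert this using 1
    · rfl
    · rfl
    ring
  have hVd : HasDerivAt V
      (2 * lam * φ ε * (mu + lam * φ ε ^ 2) * (12 * lam ^ 2 * φ ε - 12 * mu ^ 2 / φ ε ^ 3)
        + (mu + lam * φ ε ^ 2) *
          (12 * lam ^ 2 * (mu + lam * φ ε ^ 2)
            - (0 * φ ε ^ 3 - 12 * mu ^ 2 * (3 * φ ε ^ 2 * (mu + lam * φ ε ^ 2))) / (φ ε ^ 3) ^ 2)) ε :=
    h2.mul hD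
  have hEq : deriv U =ᶠ[𝓝 ε] V :=
    Filter.eventuallyEq_of_mem (hS.mem_nhds hε) hderivU
  have hdd : deriv (deriv U) ε = deriv V ε := hEq.deriv_eq
  rw [hdd, hVd.deriv, hU, hk]
  have hne2 : φ ε ^ 2 ≠ 0 := pow_ne_zero 2 hne
  field_simp
  ring
end

section
/- Let φ satisfy φ' = μ + λφ² on an open set S where φ ≠ 0. Let k² = 1 − 16λμ and define U(ε) = −4λμ + 6λ² φ(ε)² + 6μ² φ(ε)^{−2}. Then U satisfies U'' + (k² − 1)U − U² = 0 on S. -/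
open Filter Topology Real

/-- Set 6 solution of the reduced Boussinesq ODE U'' + (k²−1)U − U² = 0. -/
theorem stmt_13 (lam mu k : ℝ) (φ U : ℝ → ℝ) (S : Set ℝ) (hS : IsOpen S)
    (hφ0 : ∀ ε ∈ S, φ ε ≠ 0)
    (hφ : ∀ ε ∈ S, HasDerivAt φ (mu + lam * φ ε ^ 2) ε)
    (hk : k ^ 2 = 1 - 16 * lam * mu)
    (hU : U = fun ε => -4 * lam * mu + 6 * lam ^ 2 * φ ε ^ 2 + 6 * mu ^ 2 / φ ε ^ 2) :
    ∀ ε ∈ S, deriv (deriv U) ε + (k ^ 2 - 1) * U ε - U ε ^ 2 = 0 := by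
  set V : ℝ → ℝ := fun x => 12 * (mu + lam * φ x ^ 2) * (lam ^ 2 * φ x - mu ^ 2 / φ x ^ 3)
    with hV
  have key : ∀ x ∈ S, HasDerivAt U (V x) x := by
    intro x hx
    have h0 := hφ0 x hx
    have h1 := hφ x hx
    have h2 : HasDerivAt (fun y => φ y ^ 2) (2 * φ x * (mu + lam * φ x ^ 2)) x := by
      have : HasDerivAt (fun y => φ y ^ 2) (((2:ℕ):ℝ) * φ x ^ 1 * (mu + lam * φ x ^ 2)) x :=
        h1.fun_pow 2
      convert this using 1
      ring
    have h3 : HasDerivAt U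
        (0 + 6 * lam ^ 2 * (2 * φ x * (mu + lam * φ x ^ 2)) +
          (0 * φ x ^ 2 - 6 * mu ^ 2 * (2 * φ x * (mu + lam * φ x ^ 2))) / (φ x ^ 2) ^ 2) x := by
      rw [hU]
      exact ((hasDerivAt_const x (-4 * lam * mu)).add (h2.const_mul (6 * lam ^ 2))).add
        ((hasDerivAt_const x (6 * mu ^ 2)).div h2 (pow_ne_zero 2 h0))
    have goal : V x = 0 + 6 * lam ^ 2 * (2 * φ x * (mu + lam * φ x ^ 2)) +
        (0 * φ x ^ 2 - 6 * mu ^ 2 * (2 * φ x * (mu + lam * φ x ^ 2))) / (φ x ^ 2) ^ 2 := by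
      rw [hV]
      field_simp
      ring
    rw [goal]
    exact h3
  intro ε hε
  have h0 := hφ0 ε hε
  have h1 := hφ ε hε
  have hEq : deriv U =ᶠ[𝓝 ε] V := by
    filter_upwards [hS.mem_nhds hε] with x hx
    exact (key x hx).deriv
  have hVd : HasDerivAt V
      (12 * (0 + lam * (2 * φ ε * (mu + lam * φ ε ^ 2))) * (lam ^ 2 * φ ε - mu ^ 2 / φ ε ^ 3)
        + 12 * (mu + lam * φ ε ^ 2) *
          (lam ^ 2 * (mu + lam * φ ε ^ 2) -
            (0 * φ ε ^ 3 - mu ^ 2 * (3 * φ ε ^ 2 * (mu + lam * φ ε ^ 2))) / (φ ε ^ 3) ^ 2)) ε := by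
    have hp3 : HasDerivAt (fun y => φ y ^ 3) (3 * φ ε ^ 2 * (mu + lam * φ ε ^ 2)) ε := by
      have : HasDerivAt (fun y => φ y ^ 3) (((3:ℕ):ℝ) * φ ε ^ 2 * (mu + lam * φ ε ^ 2)) ε :=
        h1.fun_pow 3
      convert this using 1
      push_cast
      ring
    have hA : HasDerivAt (fun y => 12 * (mu + lam * φ y ^ 2))
        (12 * (0 + lam * (2 * φ ε * (mu + lam * φ ε ^ 2)))) ε := by
      have h2 : HasDerivAt (fun y => φ y ^ 2) (2 * φ ε * (mu + lam * φ ε ^ 2)) ε := by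
        have : HasDerivAt (fun y => φ y ^ 2) (((2:ℕ):ℝ) * φ ε ^ 1 * (mu + lam * φ ε ^ 2)) ε :=
          h1.fun_pow 2
        convert this using 1
        ring
      exact ((hasDerivAt_const ε mu).add (h2.const_mul lam)).const_mul 12
    have hB : HasDerivAt (fun y => lam ^ 2 * φ y - mu ^ 2 / φ y ^ 3)
        (lam ^ 2 * (mu + lam * φ ε ^ 2) -
          (0 * φ ε ^ 3 - mu ^ 2 * (3 * φ ε ^ 2 * (mu + lam * φ ε ^ 2))) / (φ ε ^ 3) ^ 2) ε :=
      (h1.const_mul (lam ^ 2)).sub ((hasDerivAt_const ε (mu ^ 2)).div hp3 (pow_ne_zero 3 h0))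
    exact hA.mul hB
  have hderiv2 : deriv (deriv U) ε = deriv V ε := hEq.deriv_eq
  rw [hderiv2, hVd.deriv, hU]
  simp only
  rw [hk]
  field_simp
  ring
end

section
/- Let φ satisfy φ' = μ + λφ² on an open set S, with k² = 1 − 4λμ, and define U(ε) = 2λμ + 6λ² φ(ε)². Then U satisfies U'' + (k² − 1)U − U² = 0 on S. -/
open Filter Topology Real

/-- Set 4 solution of the reduced Boussinesq ODE U'' + (k²−1)U − U² = 0. -/
theorem stmt_14 (lam mu k : ℝ) (φ U : ℝ → ℝ) (S : Set ℝ) (hS : IsOpen S)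
    (hφ : ∀ ε ∈ S, HasDerivAt φ (mu + lam * φ ε ^ 2) ε)
    (hk : k ^ 2 = 1 - 4 * lam * mu)
    (hU : U = fun ε => 2 * lam * mu + 6 * lam ^ 2 * φ ε ^ 2) :
    ∀ ε ∈ S, deriv (deriv U) ε + (k ^ 2 - 1) * U ε - U ε ^ 2 = 0 := by
  intro ε hε
  have hU1 : ∀ x ∈ S, HasDerivAt U (12 * lam ^ 2 * φ x * (mu + lam * φ x ^ 2)) x := by
    intro x hx
    subst hU
    have h := (((hφ x hx).fun_pow 2).const_mul (6 * lam ^ 2)).const_add (2 * lam * mu)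
    refine h.congr_deriv ?_
    ring
  have hderivU : Set.EqOn (deriv U) (fun x => 12 * lam ^ 2 * φ x * (mu + lam * φ x ^ 2)) S := by
    intro x hx
    exact (hU1 x hx).deriv
  have hev : deriv U =ᶠ[𝓝 ε] fun x => 12 * lam ^ 2 * φ x * (mu + lam * φ x ^ 2) :=
    Filter.eventuallyEq_of_mem (hS.mem_nhds hε) hderivU
  have hg : HasDerivAt (fun x => 12 * lam ^ 2 * φ x * (mu + lam * φ x ^ 2))
      (12 * lam ^ 2 * (mu + lam * φ ε ^ 2) * (mu + lam * φ ε ^ 2) +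
        12 * lam ^ 2 * φ ε * (lam * (2 * φ ε * (mu + lam * φ ε ^ 2)))) ε := by
    have h1 := (hφ ε hε).const_mul (12 * lam ^ 2)
    have h2 := (((hφ ε hε).fun_pow 2).const_mul lam).const_add mu
    have := h1.mul h2
    refine this.congr_deriv ?_
    ring
  have h2 : deriv (deriv U) ε =
      12 * lam ^ 2 * (mu + lam * φ ε ^ 2) * (mu + lam * φ ε ^ 2) +
        12 * lam ^ 2 * φ ε * (lam * (2 * φ ε * (mu + lam * φ ε ^ 2))) := by
    rw [hev.deriv_eq, hg.deriv]
  rw [h2, hU, hk]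
  ring
end

section
/- Let β, γ, λ, μ ∈ ℝ with β ≠ 0, and let φ satisfy φ' = μ + λφ² on an open set S. Let k² = 4λγμ and define U(ε) = 6λγμ/β + (6λ²γ/β) φ(ε)². Then U satisfies −k² U + β U² − γ U'' = 0 on S. -/
open Filter Topology Real

/-- Set 1 solution of the reduced coupled Boussinesq ODE −k²U + βU² − γU'' = 0. -/
theorem stmt_16 (beta gamma lam mu k : ℝ) (hbeta : beta ≠ 0) (φ U : ℝ → ℝ) (S : Set ℝ)
    (hS : IsOpen S)
    (hφ : ∀ ε ∈ S, HasDerivAt φ (mu + lam * φ ε ^ 2) ε)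
    (hk : k ^ 2 = 4 * lam * gamma * mu)
    (hU : U = fun ε => 6 * lam * gamma * mu / beta + 6 * lam ^ 2 * gamma / beta * φ ε ^ 2) :
    ∀ ε ∈ S, -(k ^ 2) * U ε + beta * U ε ^ 2 - gamma * deriv (deriv U) ε = 0 := by
  set a : ℝ := 6 * lam ^ 2 * gamma / beta with ha
  have hU' : ∀ ε ∈ S, HasDerivAt U (a * (2 * φ ε * (mu + lam * φ ε ^ 2))) ε := by
    intro ε hε
    rw [hU]
    have := ((hφ ε hε).fun_pow 2).const_mul a |>.const_add (6 * lam * gamma * mu / beta)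
    refine this.congr_deriv ?_
    ring
  have hderivU : ∀ ε ∈ S, deriv U ε = a * (2 * φ ε * (mu + lam * φ ε ^ 2)) := fun ε hε =>
    (hU' ε hε).deriv
  intro ε hε
  have heq : deriv U =ᶠ[𝓝 ε] fun x => a * (2 * φ x * (mu + lam * φ x ^ 2)) := by
    filter_upwards [hS.mem_nhds hε] with x hx using hderivU x hx
  have h2 : HasDerivAt (fun x => a * (2 * φ x * (mu + lam * φ x ^ 2)))
      (a * (2 * (mu + lam * φ ε ^ 2) * (mu + lam * φ ε ^ 2)
        + 2 * φ ε * (lam * (2 * φ ε * (mu + lam * φ ε ^ 2))))) ε := by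
    have h := hφ ε hε
    refine (((h.const_mul 2).mul ((h.fun_pow 2).const_mul lam |>.const_add mu)).const_mul a).congr_deriv ?_
    push_cast; ring
  have : deriv (deriv U) ε = a * (2 * (mu + lam * φ ε ^ 2) * (mu + lam * φ ε ^ 2)
      + 2 * φ ε * (lam * (2 * φ ε * (mu + lam * φ ε ^ 2)))) := by
    rw [Filter.EventuallyEq.deriv_eq heq]
    exact h2.deriv
  rw [this, hU, hk, ha]
  field_simp
  ring
end

section
/- Let β, γ, λ, μ ∈ ℝ with β ≠ 0, and let φ satisfy φ' = μ + λφ² on an open set S where φ ≠ 0. Let k² = −4λγμ and define U(ε) = 2λγμ/β + (6μ²γ/β) φ(ε)^{−2}. Then U satisfies −k² U + β U² − γ U'' = 0 on S. -/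
open Filter Topology Real

/-- Set 4 solution of the reduced coupled Boussinesq ODE −k²U + βU² − γU'' = 0. -/
theorem stmt_17 (beta gamma lam mu k : ℝ) (hbeta : beta ≠ 0) (φ U : ℝ → ℝ) (S : Set ℝ)
    (hS : IsOpen S) (hφ0 : ∀ ε ∈ S, φ ε ≠ 0)
    (hφ : ∀ ε ∈ S, HasDerivAt φ (mu + lam * φ ε ^ 2) ε)
    (hk : k ^ 2 = -(4 * lam * gamma * mu))
    (hU : U = fun ε => 2 * lam * gamma * mu / beta + 6 * mu ^ 2 * gamma / beta / φ ε ^ 2) :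
    ∀ ε ∈ S, -(k ^ 2) * U ε + beta * U ε ^ 2 - gamma * deriv (deriv U) ε = 0 := by
  set g : ℝ → ℝ := fun ε =>
    -12 * mu ^ 2 * gamma / beta * (mu + lam * φ ε ^ 2) / φ ε ^ 3 with hg
  set h : ℝ → ℝ := fun ε =>
    -12 * mu ^ 2 * gamma / beta * (mu + lam * φ ε ^ 2) * (-(3 * mu) - lam * φ ε ^ 2)
      / φ ε ^ 4 with hh
  have hUd : ∀ ε ∈ S, HasDerivAt U (g ε) ε := by
    intro ε hε
    have h0 := hφ0 ε hε
    have hp : HasDerivAt (fun x => φ x ^ 2) (2 * φ ε ^ 1 * (mu + lam * φ ε ^ 2)) ε :=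
      (hφ ε hε).pow 2
    have hdiv := (hasDerivAt_const ε (6 * mu ^ 2 * gamma / beta)).div hp (pow_ne_zero 2 h0)
    have := (hasDerivAt_const ε (2 * lam * gamma * mu / beta)).add hdiv
    rw [hU]
    refine this.congr_deriv (Eq.symm ?_)
    simp only [zero_add]
    rw [div_eq_div_iff (pow_ne_zero 3 h0) (pow_ne_zero 2 (pow_ne_zero 2 h0))]
    field_simp [hbeta]
    ring
  have hgd : ∀ ε ∈ S, HasDerivAt g (h ε) ε := by
    intro ε hε
    have h0 := hφ0 ε hε
    have hnum : HasDerivAt (fun x => -12 * mu ^ 2 * gamma / beta * (mu + lam * φ x ^ 2))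
        (-12 * mu ^ 2 * gamma / beta * (lam * (2 * φ ε ^ 1 * (mu + lam * φ ε ^ 2)))) ε := by
      exact (((hφ ε hε).pow 2).const_mul lam).const_add mu |>.const_mul _
    have hden : HasDerivAt (fun x => φ x ^ 3) (3 * φ ε ^ 2 * (mu + lam * φ ε ^ 2)) ε :=
      (hφ ε hε).pow 3
    have := hnum.div hden (pow_ne_zero 3 h0)
    refine this.congr_deriv (Eq.symm ?_)
    beta_reduce
    rw [div_eq_div_iff (pow_ne_zero 4 h0) (pow_ne_zero 2 (pow_ne_zero 3 h0))]
    field_simp [hbeta]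
    ring
  intro ε hε
  have hdU : deriv U =ᶠ[𝓝 ε] g := by
    filter_upwards [hS.mem_nhds hε] with x hx using (hUd x hx).deriv
  have hd2 : deriv (deriv U) ε = h ε := by
    rw [hdU.deriv_eq]
    exact (hgd ε hε).deriv
  have h0 := hφ0 ε hε
  rw [hd2, hU, hk]
  simp only [hh]
  field_simp [hbeta, h0]
  ring
end

section
/- Let β, γ, λ, μ ∈ ℝ with β ≠ 0, and let φ satisfy φ' = μ + λφ² on an open set S where φ ≠ 0. Let k² = 16λγμ and define U(ε) = 12λγμ/β + (6λ²γ/β) φ(ε)² + (6μ²γ/β) φ(ε)^{−2}. Then U satisfies −k² U + β U² − γ U'' = 0 on S. -/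
open Filter Topology Real

/-- Set 5 solution of the reduced coupled Boussinesq ODE −k²U + βU² − γU'' = 0. -/
theorem stmt_18 (beta gamma lam mu k : ℝ) (hbeta : beta ≠ 0) (φ U : ℝ → ℝ) (S : Set ℝ)
    (hS : IsOpen S) (hφ0 : ∀ ε ∈ S, φ ε ≠ 0)
    (hφ : ∀ ε ∈ S, HasDerivAt φ (mu + lam * φ ε ^ 2) ε)
    (hk : k ^ 2 = 16 * lam * gamma * mu)
    (hU : U = fun ε => 12 * lam * gamma * mu / beta + 6 * lam ^ 2 * gamma / beta * φ ε ^ 2 +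
      6 * mu ^ 2 * gamma / beta / φ ε ^ 2) :
    ∀ ε ∈ S, -(k ^ 2) * U ε + beta * U ε ^ 2 - gamma * deriv (deriv U) ε = 0 := by
  intro ε hε
  have hφε := hφ ε hε
  have hφne := hφ0 ε hε
  set V : ℝ → ℝ := fun x => 12 * lam ^ 2 * gamma / beta * (φ x * (mu + lam * φ x ^ 2)) -
    12 * mu ^ 2 * gamma / beta * (φ x * (mu + lam * φ x ^ 2)) / (φ x ^ 2) ^ 2 with hV
  have hUD : ∀ x ∈ S, HasDerivAt U (V x) x := by
    intro x hx
    have hx0 := hφ0 x hx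
    have hxd := hφ x hx
    have h1 : HasDerivAt (fun y => φ y ^ 2) (2 * φ x ^ 1 * (mu + lam * φ x ^ 2)) x := by
      exact (hxd.pow 2).congr_deriv (by norm_num)
    have h2 : HasDerivAt (fun y => 6 * lam ^ 2 * gamma / beta * φ y ^ 2)
        (6 * lam ^ 2 * gamma / beta * (2 * φ x ^ 1 * (mu + lam * φ x ^ 2))) x := h1.const_mul _
    have hx2 : φ x ^ 2 ≠ 0 := pow_ne_zero _ hx0
    have h3 : HasDerivAt (fun y => 6 * mu ^ 2 * gamma / beta / φ y ^ 2)
        ((0 * φ x ^ 2 - 6 * mu ^ 2 * gamma / beta * (2 * φ x ^ 1 * (mu + lam * φ x ^ 2))) /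
          (φ x ^ 2) ^ 2) x :=
      (hasDerivAt_const x _).div h1 hx2
    have h4 := ((hasDerivAt_const x (12 * lam * gamma * mu / beta)).add h2).add h3
    rw [hU]
    have h5 : V x = 0 + 6 * lam ^ 2 * gamma / beta * (2 * φ x ^ 1 * (mu + lam * φ x ^ 2)) +
        (0 * φ x ^ 2 - 6 * mu ^ 2 * gamma / beta * (2 * φ x ^ 1 * (mu + lam * φ x ^ 2))) /
          (φ x ^ 2) ^ 2 := by
      simp only [hV]
      field_simp
      ring
    rw [h5]
    exact h4
  have hEq : deriv U =ᶠ[𝓝 ε] V :=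
    Filter.eventuallyEq_of_mem (hS.mem_nhds hε) (fun x hx => (hUD x hx).deriv)
  -- derivative of V at ε
  have h1 : HasDerivAt (fun y => φ y ^ 2) (2 * φ ε ^ 1 * (mu + lam * φ ε ^ 2)) ε := by
    exact (hφε.pow 2).congr_deriv (by norm_num)
  have hf : HasDerivAt (fun y => φ y * (mu + lam * φ y ^ 2))
      ((mu + lam * φ ε ^ 2) * (mu + lam * φ ε ^ 2) +
        φ ε * (lam * (2 * φ ε ^ 1 * (mu + lam * φ ε ^ 2)))) ε := by
    have hc : HasDerivAt (fun y => mu + lam * φ y ^ 2)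
        (lam * (2 * φ ε ^ 1 * (mu + lam * φ ε ^ 2))) ε := by
      exact ((hasDerivAt_const ε mu).add (h1.const_mul lam)).congr_deriv (by ring)
    exact hφε.mul hc
  have hg : HasDerivAt (fun y => (φ y ^ 2) ^ 2)
      (2 * (φ ε ^ 2) ^ 1 * (2 * φ ε ^ 1 * (mu + lam * φ ε ^ 2))) ε := h1.pow 2
  have hx2 : (φ ε ^ 2) ^ 2 ≠ 0 := pow_ne_zero _ (pow_ne_zero _ hφne)
  set f' := (mu + lam * φ ε ^ 2) * (mu + lam * φ ε ^ 2) +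
    φ ε * (lam * (2 * φ ε ^ 1 * (mu + lam * φ ε ^ 2))) with hf'
  have hVD : HasDerivAt V
      (12 * lam ^ 2 * gamma / beta * f' -
        (12 * mu ^ 2 * gamma / beta * f' * (φ ε ^ 2) ^ 2 -
          12 * mu ^ 2 * gamma / beta * (φ ε * (mu + lam * φ ε ^ 2)) *
            (2 * (φ ε ^ 2) ^ 1 * (2 * φ ε ^ 1 * (mu + lam * φ ε ^ 2)))) /
          ((φ ε ^ 2) ^ 2) ^ 2) ε := by
    exact (hf.const_mul _).sub (((hf.const_mul (12 * mu ^ 2 * gamma / beta)).div hg hx2))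
  have hdd : deriv (deriv U) ε = 12 * lam ^ 2 * gamma / beta * f' -
      (12 * mu ^ 2 * gamma / beta * f' * (φ ε ^ 2) ^ 2 -
        12 * mu ^ 2 * gamma / beta * (φ ε * (mu + lam * φ ε ^ 2)) *
          (2 * (φ ε ^ 2) ^ 1 * (2 * φ ε ^ 1 * (mu + lam * φ ε ^ 2)))) /
        ((φ ε ^ 2) ^ 2) ^ 2 := by
    rw [hEq.deriv_eq]
    exact hVD.deriv
  rw [hdd, hU, hf', hk]
  field_simp [hφne]
  ring
end

section
/- Let β, γ, C, D ∈ ℝ with β ≠ 0, C ≠ 0, and k = 0. Then U(ε) = (6γ/β) C²/(Cε + D)² satisfies β U² − γ U'' = 0 (i.e., −k²U + βU² − γU'' = 0 with k² = 4λγμ and μ = 0) at every ε with Cε + D ≠ 0. -/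
open Filter Topology Real

lemma aux_hasDerivAt (a C D : ℝ) (x : ℝ) (hx : C * x + D ≠ 0) :
    HasDerivAt (fun y => a / (C * y + D) ^ 2) (-2 * a * C / (C * x + D) ^ 3) x := by
  have hlin : HasDerivAt (fun y : ℝ => C * y + D) C x := by
    simpa using ((hasDerivAt_id x).const_mul C).add_const D
  have hpow : HasDerivAt (fun y : ℝ => (C * y + D) ^ 2) (2 * (C * x + D) ^ 1 * C) x :=
    hlin.pow 2
  have h : HasDerivAt (fun y => a / (C * y + D) ^ 2)
      ((0 * (C * x + D) ^ 2 - a * (2 * (C * x + D) ^ 1 * C)) / ((C * x + D) ^ 2) ^ 2) x :=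
    (hasDerivAt_const x a).div hpow (pow_ne_zero 2 hx)
  convert h using 1
  field_simp
  ring

lemma aux_hasDerivAt3 (a C D : ℝ) (x : ℝ) (hx : C * x + D ≠ 0) :
    HasDerivAt (fun y => a / (C * y + D) ^ 3) (-3 * a * C / (C * x + D) ^ 4) x := by
  have hlin : HasDerivAt (fun y : ℝ => C * y + D) C x := by
    simpa using ((hasDerivAt_id x).const_mul C).add_const D
  have hpow : HasDerivAt (fun y : ℝ => (C * y + D) ^ 3) (3 * (C * x + D) ^ 2 * C) x :=
    hlin.pow 3
  have h : HasDerivAt (fun y => a / (C * y + D) ^ 3)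
      ((0 * (C * x + D) ^ 3 - a * (3 * (C * x + D) ^ 2 * C)) / ((C * x + D) ^ 3) ^ 2) x :=
    (hasDerivAt_const x a).div hpow (pow_ne_zero 3 hx)
  convert h using 1
  field_simp
  ring

/-- Rational solution of the reduced coupled Boussinesq ODE: βU² − γU'' = 0. -/
theorem stmt_19 (beta gamma C D k : ℝ) (hbeta : beta ≠ 0) (hC : C ≠ 0) (hk : k = 0)
    (U : ℝ → ℝ)
    (hU : U = fun ε => 6 * gamma / beta * (C ^ 2 / (C * ε + D) ^ 2))
    (ε : ℝ) (hden : C * ε + D ≠ 0) :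
    beta * U ε ^ 2 - gamma * deriv (deriv U) ε = 0 := by
  set a : ℝ := 6 * gamma / beta * C ^ 2 with ha
  have hUeq : U = fun y => a / (C * y + D) ^ 2 := by
    rw [hU]; funext y; rw [ha]; ring
  have hopen : IsOpen {x : ℝ | C * x + D ≠ 0} :=
    isOpen_ne.preimage (by continuity)
  have hmem : {x : ℝ | C * x + D ≠ 0} ∈ 𝓝 ε := hopen.mem_nhds hden
  have hev : deriv U =ᶠ[𝓝 ε] fun y => -2 * a * C / (C * y + D) ^ 3 := by
    filter_upwards [hmem] with x hx
    rw [hUeq]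
    exact (aux_hasDerivAt a C D x hx).deriv
  have h2 : deriv (deriv U) ε = -3 * (-2 * a * C) * C / (C * ε + D) ^ 4 := by
    rw [hev.deriv_eq]
    exact (aux_hasDerivAt3 (-2 * a * C) C D ε hden).deriv
  rw [h2, hUeq, ha]
  field_simp
  ring
end
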